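/- Let A = F_q[θ] and D_1 = θ^q − θ. For every ε ∈ F_q^× and every d ≥ 0, the power-sum identity S_d(ε; q) + ε^{−1} D_1 S_{d+1}(ε,1; 1, q−1) = 0 holds, where S_d(ε; q) = ∑_{a monic, deg a = d} ε^d a^{−q} and S_{d+1}(ε,1;1,q−1) = ∑ ε^{deg a_1} / (a_1 a_2^{q−1}) over monic a_1, a_2 with d+1 = deg a_1 > deg a_2 ≥ 0. -/

import Mathlib

open Polynomial

namespace Stmt14Aux
section Chunk1

variable {F : Type*} [Field F] [Fintype F]

set_option linter.unusedSectionVars false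
local notation "q" => Fintype.card F
local notation "KK" => RatFunc F
local notation "em" => algebraMap F (RatFunc F)
local notation "φ" => algebraMap (Polynomial F) (RatFunc F)

lemma hq2 : 1 < q := Fintype.one_lt_card

lemma em_eq (c : F) : em c = φ (C c) := by
  rw [← Polynomial.algebraMap_eq]
  exact IsScalarTower.algebraMap_apply F (Polynomial F) (RatFunc F) c

lemma frob_sub (x y : KK) : (x - y) ^ q = x ^ q - y ^ q := by
  obtain ⟨n, hp, hn⟩ := FiniteField.card F (ringChar F)
  haveI : Fact (ringChar F).Prime := ⟨hp⟩
  haveI : CharP KK (ringChar F) :=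
    charP_of_injective_algebraMap (algebraMap F KK).injective _
  rw [hn]
  exact sub_pow_char_pow x y _

lemma frob_add (x y : KK) : (x + y) ^ q = x ^ q + y ^ q := by
  obtain ⟨n, hp, hn⟩ := FiniteField.card F (ringChar F)
  haveI : Fact (ringChar F).Prime := ⟨hp⟩
  haveI : CharP KK (ringChar F) :=
    charP_of_injective_algebraMap (algebraMap F KK).injective _
  rw [hn]
  exact add_pow_char_pow x y _ _

lemma neg_one_q : (-1 : KK) ^ q = -1 := by
  obtain ⟨n, hp, hn⟩ := FiniteField.card F (ringChar F)
  haveI : Fact (ringChar F).Prime := ⟨hp⟩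
  haveI : CharP KK (ringChar F) :=
    charP_of_injective_algebraMap (algebraMap F KK).injective _
  rw [hn]
  exact neg_one_pow_char_pow KK (ringChar F) n

lemma castq0 : ((q : ℕ) : KK) = 0 := by
  have h : ((q : ℕ) : F) = 0 := FiniteField.cast_card_eq_zero F
  rw [← map_natCast em, h, map_zero]



lemma poly_prod_X_sub_C : (∏ c : F, (X - C c)) = X ^ q - X := by
  classical
  have hm : (X ^ q - X : F[X]).Monic := by
    apply Polynomial.monic_X_pow_sub
    rw [degree_X]
    exact_mod_cast hq2 (F := F)
  have hroots := FiniteField.roots_X_pow_card_sub_X F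
  have hcard : (X ^ q - X : F[X]).roots.card = (X ^ q - X : F[X]).natDegree := by
    rw [hroots, FiniteField.X_pow_card_sub_X_natDegree_eq F (hq2)]
    simp [Finset.card_univ]
  have := prod_multiset_X_sub_C_of_monic_of_roots_card_eq hm hcard
  rw [hroots] at this
  rw [← this]
  rfl

lemma prodQ (Z : KK) : (∏ c : F, (Z - em c)) = Z ^ q - Z := by
  have := congrArg (aeval Z) (poly_prod_X_sub_C (F := F))
  simpa [em_eq, map_prod] using this

lemma prodF (Z u : KK) : (∏ c : F, (Z - em c * u)) = Z ^ q - u ^ (q - 1) * Z := by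
  rcases eq_or_ne u 0 with rfl | hu
  · simp [Finset.prod_const, Finset.card_univ, zero_pow (Nat.sub_ne_zero_of_lt (hq2 (F := F)))]
  · have h1 : ∀ c : F, Z - em c * u = u * (Z * u⁻¹ - em c) := by
      intro c; field_simp
    rw [Finset.prod_congr rfl fun c _ => h1 c, Finset.prod_mul_distrib,
      Finset.prod_const, Finset.card_univ, prodQ]
    have hq1 : q - 1 + 1 = q := Nat.succ_pred_eq_of_pos Fintype.card_pos
    obtain ⟨k, hk⟩ : ∃ k, q = k + 1 := ⟨q - 1, hq1.symm⟩
    rw [mul_pow, hk]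
    simp only [Nat.add_sub_cancel]
    have e : u ^ (k + 1) * (Z ^ (k + 1) * u⁻¹ ^ (k + 1)) = Z ^ (k + 1) := by
      rw [mul_left_comm, ← mul_pow, mul_inv_cancel₀ hu, one_pow, mul_one]
    have e2 : u ^ (k + 1) * (Z * u⁻¹) = u ^ k * Z := by
      rw [pow_succ, mul_comm Z, ← mul_assoc, mul_assoc (u ^ k), mul_inv_cancel₀ hu, mul_one]
    linear_combination e - e2

lemma sumpow_eq_F : ∑ c : F, c ^ (q - 1) = -1 := by
  classical
  have hq1 : 0 < q - 1 := by have := hq2 (F := F); omega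
  rw [← Finset.sum_erase_add _ _ (Finset.mem_univ (0 : F)), zero_pow (by omega), add_zero]
  have h1 : ∀ c ∈ Finset.univ.erase (0 : F), c ^ (q - 1) = 1 := fun c hc =>
    FiniteField.pow_card_sub_one_eq_one c (Finset.ne_of_mem_erase hc)
  rw [Finset.sum_congr rfl h1, Finset.sum_const,
    Finset.card_erase_of_mem (Finset.mem_univ 0), Finset.card_univ, nsmul_eq_mul, mul_one]
  have hc : ((q : ℕ) : F) = 0 := FiniteField.cast_card_eq_zero F
  have : ((q - 1 : ℕ) : F) = ((q : ℕ) : F) - 1 := by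
    rw [Nat.cast_sub (by have := hq2 (F := F); omega)]
    simp
  rw [this, hc, zero_sub]

lemma powsum_lt (z : KK) {m : ℕ} (hm : m < q - 1) : ∑ c : F, (z - em c) ^ m = 0 := by
  have h1 : ∀ c : F, (z - em c) ^ m
      = ∑ k ∈ Finset.range (m + 1), z ^ k * (-(em c)) ^ (m - k) * (m.choose k) := by
    intro c; rw [sub_eq_add_neg]; exact add_pow z (-(em c)) m
  rw [Finset.sum_congr rfl fun c _ => h1 c, Finset.sum_comm]
  apply Finset.sum_eq_zero
  intro k hk
  have h2 : ∑ c : F, (-(em c)) ^ (m - k) = 0 := by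
    have h3 : ∀ c : F, (-(em c)) ^ (m - k) = (-1) ^ (m - k) * em (c ^ (m - k)) := by
      intro c; rw [neg_pow, map_pow]
    rw [Finset.sum_congr rfl fun c _ => h3 c, ← Finset.mul_sum, ← map_sum,
      FiniteField.sum_pow_lt_card_sub_one F (m - k) (by omega), map_zero, mul_zero]
  calc ∑ c : F, z ^ k * (-(em c)) ^ (m - k) * (m.choose k)
      = z ^ k * (∑ c : F, (-(em c)) ^ (m - k)) * (m.choose k) := by
        rw [Finset.mul_sum, Finset.sum_mul]
    _ = 0 := by rw [h2, mul_zero, zero_mul]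

lemma powsum_eq (z : KK) : ∑ c : F, (z - em c) ^ (q - 1) = (-1) ^ q := by
  have h1 : ∀ c : F, (z - em c) ^ (q - 1)
      = ∑ k ∈ Finset.range (q - 1 + 1), z ^ k * (-(em c)) ^ (q - 1 - k) * ((q - 1).choose k) := by
    intro c; rw [sub_eq_add_neg]; exact add_pow z (-(em c)) (q - 1)
  rw [Finset.sum_congr rfl fun c _ => h1 c, Finset.sum_comm]
  have hz : ∀ k ∈ Finset.range (q - 1 + 1), k ≠ 0 →
      ∑ c : F, z ^ k * (-(em c)) ^ (q - 1 - k) * ((q - 1).choose k) = 0 := by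
    intro k hk hk0
    have h2 : ∑ c : F, (-(em c)) ^ (q - 1 - k) = 0 := by
      have h3 : ∀ c : F, (-(em c)) ^ (q - 1 - k) = (-1) ^ (q - 1 - k) * em (c ^ (q - 1 - k)) := by
        intro c; rw [neg_pow, map_pow]
      have hlt : q - 1 - k < q - 1 := by
        have := hq2 (F := F)
        simp only [Finset.mem_range] at hk
        omega
      rw [Finset.sum_congr rfl fun c _ => h3 c, ← Finset.mul_sum, ← map_sum,
        FiniteField.sum_pow_lt_card_sub_one F (q - 1 - k) hlt, map_zero, mul_zero]
    calc ∑ c : F, z ^ k * (-(em c)) ^ (q - 1 - k) * ((q - 1).choose k)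
        = z ^ k * (∑ c : F, (-(em c)) ^ (q - 1 - k)) * ((q - 1).choose k) := by
          rw [Finset.mul_sum, Finset.sum_mul]
      _ = 0 := by rw [h2, mul_zero, zero_mul]
  rw [Finset.sum_eq_single 0 hz (fun h => absurd (Finset.mem_range.mpr (by omega)) h)]
  have h4 : ∑ c : F, (-(em c)) ^ (q - 1) = (-1) ^ (q - 1) * em (∑ c : F, c ^ (q - 1)) := by
    have h3 : ∀ c : F, (-(em c)) ^ (q - 1) = (-1) ^ (q - 1) * em (c ^ (q - 1)) := by
      intro c; rw [neg_pow, map_pow]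
    rw [Finset.sum_congr rfl fun c _ => h3 c, ← Finset.mul_sum, ← map_sum]
  calc ∑ c : F, z ^ 0 * (-(em c)) ^ (q - 1 - 0) * ((q - 1).choose 0)
      = ∑ c : F, (-(em c)) ^ (q - 1) := by simp
    _ = (-1) ^ (q - 1) * em (∑ c : F, c ^ (q - 1)) := h4
    _ = (-1) ^ (q - 1) * (-1) := by rw [sumpow_eq_F, map_neg, map_one]
    _ = (-1) ^ q := by
        rw [← pow_succ, Nat.sub_add_cancel Fintype.card_pos]

lemma key_frob (z : KK) (c : F) : (z - em c) ^ q = z ^ q - em c := by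
  rw [frob_sub, ← map_pow, FiniteField.pow_card]

lemma rank1 : ∀ s : ℕ, 1 ≤ s → s ≤ q → ∀ z : KK, (∀ c : F, z - em c ≠ 0) →
    ∑ c : F, ((z - em c)⁻¹) ^ s = (-1) ^ s * ((z ^ q - z)⁻¹) ^ s := by
  intro s
  induction s with
  | zero => intro h; omega
  | succ t ih =>
    intro _ hs z hz
    have hE : z ^ q - z ≠ 0 := by
      rw [← prodQ]
      exact Finset.prod_ne_zero_iff.mpr fun c _ => hz c
    have hEkey : ∀ c : F, z ^ q - z = (z - em c) ^ q - (z - em c) := by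
      intro c; rw [key_frob]; ring
    rcases Nat.lt_or_ge t 1 with h1 | h1
    · -- base case s = 1
      have h0 : t = 0 := by omega
      subst h0
      have hmul : (z ^ q - z) * (∑ c : F, ((z - em c)⁻¹) ^ 1) = (-1 : KK) ^ q := by
        rw [Finset.mul_sum]
        have : ∀ c : F, (z ^ q - z) * ((z - em c)⁻¹) ^ 1 = (z - em c) ^ (q - 1) - 1 := by
          intro c
          rw [pow_one, hEkey c, sub_mul]
          have hq1 : (z - em c) ^ q = (z - em c) ^ (q - 1) * (z - em c) := by
            rw [← pow_succ, Nat.sub_add_cancel Fintype.card_pos]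
          rw [hq1, mul_assoc, mul_inv_cancel₀ (hz c), mul_one]
        rw [Finset.sum_congr rfl fun c _ => this c, Finset.sum_sub_distrib, powsum_eq,
          Finset.sum_const, Finset.card_univ, nsmul_eq_mul, mul_one, castq0, sub_zero]
      have : (z ^ q - z) * (∑ c : F, ((z - em c)⁻¹) ^ 1)
          = (z ^ q - z) * ((-1) ^ 1 * ((z ^ q - z)⁻¹) ^ 1) := by
        rw [hmul, pow_one, pow_one, neg_one_q]
        field_simp
      exact mul_left_cancel₀ hE this
    · -- inductive step: t ≥ 1
      have ht1 : 1 ≤ t := by omega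
      have ihv := ih ht1 (by omega) z hz
      have hmul : (z ^ q - z) * (∑ c : F, ((z - em c)⁻¹) ^ (t + 1))
          = - ∑ c : F, ((z - em c)⁻¹) ^ t := by
        rw [Finset.mul_sum]
        have hterm : ∀ c : F, (z ^ q - z) * ((z - em c)⁻¹) ^ (t + 1)
            = (z - em c) ^ (q - (t + 1)) - ((z - em c)⁻¹) ^ t := by
          intro c
          rw [hEkey c, sub_mul]
          congr 1
          · -- (z - em c)^q * ((z - em c)⁻¹)^(t+1) = (z - em c)^(q - (t+1))
            have hsplit : (z - em c) ^ q = (z - em c) ^ (q - (t + 1)) * (z - em c) ^ (t + 1) := by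
              rw [← pow_add, Nat.sub_add_cancel hs]
            rw [hsplit, mul_assoc, ← mul_pow, mul_inv_cancel₀ (hz c), one_pow, mul_one]
          · -- (z - em c) * ((z - em c)⁻¹)^(t+1) = ((z - em c)⁻¹)^t
            rw [pow_succ', ← mul_assoc, mul_inv_cancel₀ (hz c), one_mul]
        rw [Finset.sum_congr rfl fun c _ => hterm c, Finset.sum_sub_distrib,
          powsum_lt z (by omega : q - (t + 1) < q - 1), zero_sub]
      have : (z ^ q - z) * (∑ c : F, ((z - em c)⁻¹) ^ (t + 1))
          = (z ^ q - z) * ((-1) ^ (t + 1) * ((z ^ q - z)⁻¹) ^ (t + 1)) := by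
        rw [hmul, ihv]
        have : (z ^ q - z) * ((z ^ q - z)⁻¹) ^ (t + 1) = ((z ^ q - z)⁻¹) ^ t := by
          rw [pow_succ', ← mul_assoc, mul_inv_cancel₀ hE, one_mul]
        rw [mul_comm ((-1 : KK) ^ (t + 1)) _, ← mul_assoc, this, pow_succ]
        ring
      exact mul_left_cancel₀ hE this

noncomputable def vp (d : ℕ) (b : Fin d → F) : Polynomial F := ∑ i : Fin d, C (b i) * X ^ (i : ℕ)

lemma vp_coeff (d : ℕ) (b : Fin d → F) (k : ℕ) :
    (vp d b).coeff k = if h : k < d then b ⟨k, h⟩ else 0 := by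
  classical
  rw [vp, finset_sum_coeff]
  have h1 : ∀ i : Fin d, (C (b i) * X ^ (i : ℕ)).coeff k = if k = (i : ℕ) then b i else 0 := by
    intro i; rw [coeff_C_mul, coeff_X_pow, mul_ite, mul_one, mul_zero]
  rw [Finset.sum_congr rfl fun i _ => h1 i]
  split
  · next h =>
    rw [Finset.sum_eq_single (⟨k, h⟩ : Fin d)]
    · simp
    · intro i _ hne
      simp only [ite_eq_right_iff]
      intro hik
      exact absurd (Fin.ext hik.symm : i = ⟨k, h⟩) hne
    · intro h'; exact absurd (Finset.mem_univ _) h'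
  · next h =>
    apply Finset.sum_eq_zero
    intro i _
    simp only [ite_eq_right_iff]
    intro hik
    exact absurd (hik ▸ i.isLt) h

lemma vp_degree (d : ℕ) (b : Fin d → F) : (vp d b).degree < (d : ℕ) := by
  rw [vp]
  apply lt_of_le_of_lt (degree_sum_le _ _)
  rw [Finset.sup_lt_iff (by exact_mod_cast WithBot.bot_lt_coe d)]
  intro i _
  exact lt_of_le_of_lt (degree_C_mul_X_pow_le _ _) (by exact_mod_cast i.isLt)

lemma vp_snoc (d : ℕ) (b : Fin d → F) (c : F) :
    vp (d + 1) (Fin.snoc b c) = vp d b + C c * X ^ d := by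
  rw [vp, Fin.sum_univ_castSucc]
  simp [vp, Fin.snoc_castSucc, Fin.snoc_last]

lemma vp_neg (d : ℕ) (b : Fin d → F) : vp d (-b) = -vp d b := by
  rw [vp, vp, ← Finset.sum_neg_distrib]
  refine Finset.sum_congr rfl fun i _ => ?_
  simp [neg_mul]

lemma Xpow_sub_vp_ne (d k : ℕ) (hk : d ≤ k) (b : Fin d → F) : X ^ k - vp d b ≠ 0 := by
  intro h
  have h2 : (X ^ k : Polynomial F) = vp d b := by linear_combination (norm := ring_nf) h
  have h3 := vp_degree d b
  rw [← h2, degree_X_pow] at h3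
  exact absurd (lt_of_le_of_lt (by exact_mod_cast hk) h3) (lt_irrefl _)

noncomputable def mp (d : ℕ) (b : Fin d → F) : Polynomial F := X ^ d + vp d b

lemma mp_monic (d : ℕ) (b : Fin d → F) : (mp d b).Monic := by
  apply (monic_X_pow d).add_of_left
  rw [degree_X_pow]
  exact vp_degree d b

lemma mp_natDegree (d : ℕ) (b : Fin d → F) : (mp d b).natDegree = d := by
  have : (mp d b).degree = d := by
    rw [mp, degree_add_eq_left_of_degree_lt (by rw [degree_X_pow]; exact vp_degree d b),
      degree_X_pow]
  exact natDegree_eq_of_degree_eq_some this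

lemma mp_inj (d : ℕ) : Function.Injective (mp (F := F) d) := by
  intro b b' h
  rw [mp, mp] at h
  have h2 : vp d b = vp d b' := by linear_combination (norm := ring_nf) h
  funext i
  have := congrArg (fun p => Polynomial.coeff p (i : ℕ)) h2
  simpa [vp_coeff, i.isLt] using this

lemma mp_range (d : ℕ) :
    {a : Polynomial F | a.Monic ∧ a.natDegree = d} = Set.range (mp d) := by
  ext a
  constructor
  · rintro ⟨hm, hd⟩
    refine ⟨fun i => a.coeff (i : ℕ), ?_⟩
    ext k
    rw [mp, coeff_add, coeff_X_pow, vp_coeff]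
    rcases lt_trichotomy k d with h | h | h
    · simp [h, Nat.ne_of_lt h]
    · subst h
      simp only [if_pos rfl, dif_neg (lt_irrefl k), add_zero]
      have := hm.leadingCoeff
      rw [Polynomial.leadingCoeff, hd] at this
      exact this.symm
    · rw [if_neg (by omega), dif_neg (by omega), add_zero,
        Polynomial.coeff_eq_zero_of_natDegree_lt (by omega)]
  · rintro ⟨b, rfl⟩
    exact ⟨mp_monic d b, mp_natDegree d b⟩

noncomputable def eps (d : ℕ) (y : KK) : KK := ∏ b : Fin d → F, (y - φ (vp d b))

noncomputable def wK (d : ℕ) : KK := eps d (φ (X ^ d))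

lemma eps_zero (y : KK) : eps 0 y = y := by
  rw [eps, Fintype.prod_unique]
  simp [vp]

lemma eps_succ_raw (d : ℕ) (y : KK) :
    eps (d + 1) y = ∏ c : F, eps d (y - em c * φ (X ^ d)) := by
  rw [eps, ← Equiv.prod_comp (Fin.snocEquiv (fun _ => F)), Fintype.prod_prod_type]
  refine Finset.prod_congr rfl fun c _ => ?_
  rw [eps]
  refine Finset.prod_congr rfl fun b _ => ?_
  show y - φ (vp (d + 1) (Fin.snoc b c)) = y - em c * φ (X ^ d) - φ (vp d b)
  rw [vp_snoc, map_add, map_mul, em_eq, map_pow]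
  ring

lemma eps_succ_of (d : ℕ)
    (hadd : ∀ x y : KK, eps d (x + y) = eps d x + eps d y)
    (hsmul : ∀ (c : F) (y : KK), eps d (em c * y) = em c * eps d y) (y : KK) :
    eps (d + 1) y = eps d y ^ q - wK d ^ (q - 1) * eps d y := by
  rw [eps_succ_raw]
  have h1 : ∀ c : F, eps d (y - em c * φ (X ^ d)) = eps d y - em c * wK d := by
    intro c
    have : y - em c * φ (X ^ d) = y + em (-c) * φ (X ^ d) := by
      rw [map_neg]; ring
    rw [this, hadd, hsmul, map_neg, wK]
    ring
  rw [Finset.prod_congr rfl fun c _ => h1 c, prodF]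

lemma eps_lin (d : ℕ) :
    (∀ x y : KK, eps d (x + y) = eps d x + eps d y) ∧
      (∀ (c : F) (y : KK), eps d (em c * y) = em c * eps d y) := by
  induction d with
  | zero => exact ⟨fun x y => by rw [eps_zero, eps_zero, eps_zero],
      fun c y => by rw [eps_zero, eps_zero]⟩
  | succ d ih =>
    have hs := eps_succ_of d ih.1 ih.2
    constructor
    · intro x y
      rw [hs, hs, hs, ih.1, frob_add]
      ring
    · intro c y
      rw [hs, hs, ih.2, mul_pow]
      have : (em c) ^ q = em c := by rw [← map_pow, FiniteField.pow_card]
      rw [this]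
      ring

lemma eps_succ (d : ℕ) (y : KK) :
    eps (d + 1) y = eps d y ^ q - wK d ^ (q - 1) * eps d y :=
  eps_succ_of d (eps_lin d).1 (eps_lin d).2 y

lemma eps_sub_smul (d : ℕ) (y z : KK) (c : F) :
    eps d (y - em c * z) = eps d y - em c * eps d z := by
  have : y - em c * z = y + em (-c) * z := by rw [map_neg]; ring
  rw [this, (eps_lin d).1, (eps_lin d).2, map_neg]
  ring

lemma wK_ne (d : ℕ) : wK (F := F) d ≠ 0 := by
  show (∏ b : Fin d → F, (φ (X ^ d) - φ (vp d b))) ≠ 0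
  apply Finset.prod_ne_zero_iff.mpr
  intro b _
  rw [← map_sub]
  intro h
  exact Xpow_sub_vp_ne d d le_rfl b ((map_eq_zero_iff _ (RatFunc.algebraMap_injective F)).mp h)

noncomputable def kap : ℕ → (RatFunc F)
  | 0 => 1
  | d + 1 => -kap d * wK (F := F) d ^ (Fintype.card F - 1)

lemma kap_ne (d : ℕ) : kap (F := F) d ≠ 0 := by
  induction d with
  | zero => exact one_ne_zero
  | succ d ih =>
    show -kap d * wK d ^ (q - 1) ≠ 0
    exact mul_ne_zero (neg_ne_zero.mpr ih) (pow_ne_zero _ (wK_ne d))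

lemma L2 (d : ℕ) (s : ℕ) (hs1 : 1 ≤ s) (hs2 : s ≤ q) :
    ∀ y : KK, (∀ b : Fin d → F, y - φ (vp d b) ≠ 0) →
    ∑ b : Fin d → F, ((y - φ (vp d b))⁻¹) ^ s = kap d ^ s * ((eps d y)⁻¹) ^ s := by
  induction d with
  | zero =>
    intro y hy
    rw [Fintype.sum_unique]
    show ((y - φ (vp 0 default))⁻¹) ^ s = kap 0 ^ s * ((eps 0 y)⁻¹) ^ s
    rw [eps_zero]
    show _ = (1 : KK) ^ s * (y⁻¹) ^ s
    rw [one_pow, one_mul]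
    congr 2
    simp [vp]
  | succ d ih =>
    intro y hy
    -- reindex the sum over Fin (d+1) → F via snoc
    rw [← Equiv.sum_comp (Fin.snocEquiv (fun _ => F)), Fintype.sum_prod_type]
    have hsnoc : ∀ (p : F × (Fin d → F)),
        (Fin.snocEquiv (fun _ => F)) p = Fin.snoc p.2 p.1 := fun p => rfl
    simp only [hsnoc]
    have hterm : ∀ (c : F) (b : Fin d → F),
        y - φ (vp (d + 1) (Fin.snoc b c)) = (y - em c * φ (X ^ d)) - φ (vp d b) := by
      intro c b
      rw [vp_snoc, map_add, map_mul, em_eq, map_pow]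
      ring
    have hcond : ∀ c : F, ∀ b : Fin d → F, (y - em c * φ (X ^ d)) - φ (vp d b) ≠ 0 := by
      intro c b
      rw [← hterm]
      exact hy _
    have hinner : ∀ c : F,
        ∑ b : Fin d → F, ((y - φ (vp (d+1) (Fin.snoc b c)))⁻¹) ^ s
          = kap d ^ s * ((eps d (y - em c * φ (X ^ d)))⁻¹) ^ s := by
      intro c
      rw [Finset.sum_congr rfl fun b _ => by rw [hterm c b]]
      exact ih _ (hcond c)
    rw [Finset.sum_congr rfl fun c _ => hinner c, ← Finset.mul_sum]
    -- now evaluate ∑ c, ((eps d (y - em c * φ (X ^ d)))⁻¹)^s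
    have heps : ∀ c : F, eps d (y - em c * φ (X ^ d)) = eps d y - em c * wK d :=
      fun c => by rw [eps_sub_smul, wK]
    have hne : ∀ c : F, eps d y - em c * wK d ≠ 0 := by
      intro c
      rw [← heps c, eps]
      exact Finset.prod_ne_zero_iff.mpr fun b _ => hcond c b
    set u := wK (F := F) d with hu
    have hu0 : u ≠ 0 := wK_ne d
    set z := eps d y * u⁻¹ with hz
    have hz1 : ∀ c : F, eps d y - em c * u = u * (z - em c) := by
      intro c; rw [hz]; field_simp
    have hzc : ∀ c : F, z - em c ≠ 0 := by
      intro c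
      have := hne c
      rw [hz1 c] at this
      exact right_ne_zero_of_mul this
    have hsum : ∑ c : F, ((eps d y - em c * u)⁻¹) ^ s
        = ((u⁻¹) ^ s) * ((-1) ^ s * ((z ^ q - z)⁻¹) ^ s) := by
      have : ∀ c : F, ((eps d y - em c * u)⁻¹) ^ s = (u⁻¹) ^ s * ((z - em c)⁻¹) ^ s := by
        intro c
        rw [hz1 c, mul_inv, mul_pow]
      rw [Finset.sum_congr rfl fun c _ => this c, ← Finset.mul_sum,
        rank1 s hs1 hs2 z hzc]
    have hzq : z ^ q - z = eps (d + 1) y * ((u⁻¹) ^ q) := by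
      rw [hz, mul_pow, eps_succ, sub_mul]
      congr 1
      have h2 : u ^ (q - 1) * (u⁻¹) ^ q = u⁻¹ := by
        have h3 : (u⁻¹) ^ q = (u⁻¹) ^ (q - 1) * u⁻¹ := by
          rw [← pow_succ, Nat.sub_add_cancel Fintype.card_pos]
        rw [h3, ← mul_assoc, ← mul_pow, mul_inv_cancel₀ hu0, one_pow, one_mul]
      linear_combination eps d y * h2.symm
    simp only [heps]
    rw [hsum, hzq]
    have hc : ((eps (d + 1) y * (u⁻¹) ^ q)⁻¹) = (eps (d + 1) y)⁻¹ * u ^ q := by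
      rw [mul_inv, inv_pow, inv_inv]
    rw [hc]
    have hkap : kap (d + 1) = -kap (F := F) d * u ^ (q - 1) := by rw [hu]; rfl
    rw [hkap]
    have hu2 : (-1 : RatFunc F) * kap d * (u⁻¹) * u ^ q = -kap d * u ^ (q - 1) := by
      have h4 : u ^ q = u ^ (q - 1) * u := by rw [← pow_succ, Nat.sub_add_cancel Fintype.card_pos]
      rw [h4, ← mul_assoc]
      field_simp
    calc kap d ^ s * ((u⁻¹) ^ s * ((-1) ^ s * ((eps (d + 1) y)⁻¹ * u ^ q) ^ s))
        = ((-1) * kap d * u⁻¹ * u ^ q) ^ s * ((eps (d + 1) y)⁻¹) ^ s := by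
          rw [mul_pow ((-1 : RatFunc F) * kap d * u⁻¹) (u ^ q),
            mul_pow ((-1 : RatFunc F) * kap d) u⁻¹, mul_pow (-1 : RatFunc F) (kap d),
            mul_pow ((eps (d + 1) y)⁻¹) (u ^ q)]
          ring
      _ = (-kap d * u ^ (q - 1)) ^ s * ((eps (d + 1) y)⁻¹) ^ s := by rw [hu2]

noncomputable def xq (i : ℕ) : RatFunc F := (φ X) ^ (Fintype.card F ^ i)

lemma xq_zero : xq (F := F) 0 = φ X := by
  show (φ X) ^ (Fintype.card F ^ 0) = φ X
  rw [pow_zero, pow_one]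

lemma xq_succ (i : ℕ) : xq (F := F) i ^ q = xq (i + 1) := by
  show ((φ X) ^ (Fintype.card F ^ i)) ^ q = (φ X) ^ (Fintype.card F ^ (i + 1))
  rw [← pow_mul, pow_succ]

noncomputable def Hh : ℕ → ℕ → RatFunc F
  | 0, k => (φ X) ^ k
  | _ + 1, 0 => 1
  | d + 1, k + 1 => Hh d (k + 1) + xq (F := F) (d + 1) * Hh (d + 1) k

lemma Hh_zero_k (k : ℕ) : Hh (F := F) 0 k = (φ X) ^ k := by simp only [Hh]

lemma Hh_succ (d k : ℕ) : Hh (F := F) (d + 1) (k + 1)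
    = Hh d (k + 1) + xq (d + 1) * Hh (d + 1) k := by simp only [Hh]

lemma Hh_zero (d : ℕ) : Hh (F := F) d 0 = 1 := by
  cases d with
  | zero => rw [Hh_zero_k, pow_zero]
  | succ d => simp only [Hh]

lemma claimH (d : ℕ) : ∀ k : ℕ, (Hh (F := F) d (k + 1)) ^ q - Hh d (k + 1)
    = (xq (d + 1) - xq 0) * Hh (d + 1) k := by
  induction d with
  | zero =>
    have hx1 : ((φ X : RatFunc F)) ^ q = xq 1 := by
      rw [← xq_zero (F := F), xq_succ]
    intro k
    induction k with
    | zero =>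
      rw [Hh_zero_k, Hh_zero, mul_one, pow_one, hx1, xq_zero]
    | succ m ihm =>
      rw [Hh_succ, Hh_zero_k, Hh_zero_k, xq_zero]
      rw [Hh_zero_k, xq_zero] at ihm
      have e2 : ((φ X : RatFunc F) ^ (m + 1)) ^ q = (xq 1) ^ (m + 1) := by
        rw [pow_right_comm, hx1]
      have e1 : ((φ X : RatFunc F) ^ (m + 1 + 1)) ^ q = (xq 1) ^ (m + 1 + 1) := by
        rw [pow_right_comm, hx1]
      rw [e2] at ihm
      rw [e1]
      linear_combination (xq (F := F) 1) * ihm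
  | succ d ihd =>
    intro k
    induction k with
    | zero =>
      rw [Hh_succ, Hh_zero, Hh_zero, mul_one, mul_one, frob_add, xq_succ]
      have h1 := ihd 0
      rw [Hh_zero, mul_one] at h1
      linear_combination h1
    | succ m ihm =>
      rw [Hh_succ d (m + 1), Hh_succ (d + 1) m, frob_add, mul_pow, xq_succ]
      linear_combination (ihd (m + 1)) + xq (F := F) (d + 2) * ihm

lemma wK_zero : wK (F := F) 0 = 1 := by
  show eps 0 (φ (X ^ 0)) = 1
  rw [eps_zero, pow_zero, map_one]

lemma eps_pow (d : ℕ) : ∀ k : ℕ, eps d ((φ X) ^ (d + k)) = wK d * Hh d k := by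
  induction d with
  | zero =>
    intro k
    rw [eps_zero, wK_zero, one_mul, zero_add, Hh_zero_k]
  | succ d ihd =>
    have hgen : ∀ k : ℕ, eps (d + 1) ((φ X) ^ (d + 1 + k))
        = wK d ^ q * ((xq (d + 1) - xq 0) * Hh (d + 1) k) := by
      intro k
      have he : d + 1 + k = d + (k + 1) := by omega
      rw [he, eps_succ, ihd (k + 1), mul_pow]
      have hw : wK (F := F) d ^ (q - 1) * (wK d * Hh d (k + 1)) = wK d ^ q * Hh d (k + 1) := by
        rw [← mul_assoc, ← pow_succ, Nat.sub_add_cancel Fintype.card_pos]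
      rw [hw, ← mul_sub, claimH d k]
    intro k
    have hw1 : wK (F := F) (d + 1) = wK d ^ q * (xq (d + 1) - xq 0) := by
      show eps (d + 1) (φ (X ^ (d + 1))) = _
      rw [map_pow]
      have := hgen 0
      rw [add_zero, Hh_zero, mul_one] at this
      exact this
    rw [hgen k, hw1, mul_assoc]

lemma wsucc (d : ℕ) : wK (F := F) (d + 1) = wK d ^ q * (xq (d + 1) - xq 0) := by
  have h0 : wK (F := F) (d + 1) = eps (d + 1) ((φ X) ^ (d + 1)) := by
    show eps (d + 1) (φ (X ^ (d + 1))) = _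
    rw [map_pow]
  rw [h0, eps_succ, eps_pow d 1, mul_pow]
  have hw : wK (F := F) d ^ (q - 1) * (wK d * Hh d 1) = wK d ^ q * Hh d 1 := by
    rw [← mul_assoc, ← pow_succ, Nat.sub_add_cancel Fintype.card_pos]
  rw [hw, ← mul_sub, claimH d 0, Hh_zero, mul_one]

lemma brk_ne (i : ℕ) (hi : 1 ≤ i) : xq (F := F) i - xq 0 ≠ 0 := by
  show (φ X) ^ (Fintype.card F ^ i) - (φ X) ^ (Fintype.card F ^ 0) ≠ 0
  rw [pow_zero, pow_one, ← map_pow, ← map_sub]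
  intro h
  have h0 := (map_eq_zero_iff _ (RatFunc.algebraMap_injective F)).mp h
  exact FiniteField.X_pow_card_pow_sub_X_ne_zero F (by omega) (hq2 (F := F)) h0

noncomputable def lam (d : ℕ) : RatFunc F := kap d * (wK d)⁻¹

lemma lam_ne (d : ℕ) : lam (F := F) d ≠ 0 :=
  mul_ne_zero (kap_ne d) (inv_ne_zero (wK_ne d))

lemma lam_zero : lam (F := F) 0 = 1 := by
  rw [lam, wK_zero, inv_one, mul_one]
  rfl

lemma lam_succ (d : ℕ) : lam (F := F) d = -lam (d + 1) * (xq (d + 1) - xq 0) := by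
  have hb := brk_ne (F := F) (d + 1) (by omega)
  have hkap : kap (F := F) (d + 1) = -kap d * wK d ^ (q - 1) := by
    show kap (d + 1) = _
    simp only [kap]
  rw [lam, lam, hkap, wsucc]
  have hw := wK_ne (F := F) d
  have hq1 : wK (F := F) d ^ q = wK d ^ (q - 1) * wK d := by
    rw [← pow_succ, Nat.sub_add_cancel Fintype.card_pos]
  rw [hq1]
  field_simp

lemma neg_one_pow_q_sub_one : ((-1 : RatFunc F)) ^ (q - 1) = 1 := by
  have h1 : ((-1 : RatFunc F)) ^ (q - 1) * (-1) = -1 := by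
    rw [← pow_succ, Nat.sub_add_cancel Fintype.card_pos, neg_one_q]
  have h2 : ((-1 : RatFunc F)) ^ (q - 1) * (-1) = 1 * (-1) := by rw [h1, one_mul]
  exact mul_right_cancel₀ (by norm_num) h2

lemma telescope (d : ℕ) : ∑ j ∈ Finset.range (d + 1), lam (F := F) j ^ (q - 1)
    = lam d ^ (q - 1) * (xq (d + 1) - xq 0) * (xq 1 - xq 0)⁻¹ := by
  induction d with
  | zero =>
    rw [Finset.sum_range_one, lam_zero, one_pow, one_mul,
      mul_inv_cancel₀ (brk_ne 1 le_rfl)]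
  | succ d ih =>
    rw [Finset.sum_range_succ, ih]
    have hds := lam_succ (F := F) d
    have hpow : lam (F := F) d ^ (q - 1)
        = lam (d + 1) ^ (q - 1) * (xq (d + 1) - xq 0) ^ (q - 1) := by
      rw [hds, mul_pow, neg_pow, neg_one_pow_q_sub_one, one_mul]
    rw [hpow]
    have hbq : (xq (F := F) (d + 1) - xq 0) ^ (q - 1) * (xq (d + 1) - xq 0)
        = (xq (d + 1) - xq 0) ^ q := by
      rw [← pow_succ, Nat.sub_add_cancel Fintype.card_pos]
    have hfrob : (xq (F := F) (d + 1) - xq 0) ^ q + (xq 1 - xq 0)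
        = xq (d + 2) - xq 0 := by
      rw [frob_sub, xq_succ, xq_succ, xq_zero]
      ring
    have hD := brk_ne (F := F) 1 le_rfl
    have hDD : (xq (F := F) 1 - xq 0)⁻¹ * (xq 1 - xq 0) = 1 := inv_mul_cancel₀ hD
    apply mul_right_cancel₀ hD
    linear_combination (lam (F := F) (d + 1) ^ (q - 1) * (xq (d + 1) - xq 0) ^ (q - 1)
        * (xq (d + 1) - xq 0) - lam (d + 1) ^ (q - 1) * (xq (d + 2) - xq 0)) * hDD
      + lam (F := F) (d + 1) ^ (q - 1) * hbq + lam (F := F) (d + 1) ^ (q - 1) * hfrob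

lemma sum_monic (d s : ℕ) (hs1 : 1 ≤ s) (hs2 : s ≤ q) :
    ∑ b : Fin d → F, ((φ (mp d b))⁻¹) ^ s = kap d ^ s * ((wK d)⁻¹) ^ s := by
  rw [← Equiv.sum_comp (Equiv.neg (Fin d → F)) (fun b => ((φ (mp d b))⁻¹) ^ s)]
  have h2 : ∀ b : Fin d → F, φ (mp d (Equiv.neg (Fin d → F) b)) = φ (X ^ d) - φ (vp d b) := by
    intro b
    have : Equiv.neg (Fin d → F) b = -b := rfl
    rw [this, mp, vp_neg, map_add, map_neg]
    ring
  have hcond : ∀ b : Fin d → F, φ (X ^ d) - φ (vp d b) ≠ 0 := by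
    intro b
    rw [← map_sub]
    intro h
    exact Xpow_sub_vp_ne d d le_rfl b ((map_eq_zero_iff _ (RatFunc.algebraMap_injective F)).mp h)
  calc ∑ b : Fin d → F, ((φ (mp d (Equiv.neg (Fin d → F) b)))⁻¹) ^ s
      = ∑ b : Fin d → F, ((φ (X ^ d) - φ (vp d b))⁻¹) ^ s :=
        Finset.sum_congr rfl fun b _ => by rw [h2 b]
    _ = kap d ^ s * ((eps d (φ (X ^ d)))⁻¹) ^ s := L2 d s hs1 hs2 _ hcond
    _ = kap d ^ s * ((wK d)⁻¹) ^ s := rfl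

noncomputable def mSig (d : ℕ) (σ : Σ j : Fin (d + 1), (Fin (j : ℕ) → F)) : Polynomial F :=
  mp (σ.1 : ℕ) σ.2

lemma mSig_inj (d : ℕ) : Function.Injective (mSig (F := F) d) := by
  rintro ⟨j, b⟩ ⟨j', b'⟩ h
  have hj : (j : ℕ) = (j' : ℕ) := by
    rw [← mp_natDegree (j : ℕ) b, ← mp_natDegree (j' : ℕ) b']
    exact congrArg Polynomial.natDegree h
  have hj2 : j = j' := Fin.ext hj
  subst hj2
  have := mp_inj (j : ℕ) h
  exact congrArg (Sigma.mk j) this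

lemma pair_range (d : ℕ) : {a : Polynomial F × Polynomial F |
      a.1.Monic ∧ a.2.Monic ∧ a.1.natDegree = d + 1 ∧ a.2.natDegree < d + 1}
    = Set.range (Prod.map (mp (d + 1)) (mSig (F := F) d)) := by
  ext ⟨a1, a2⟩
  simp only [Set.mem_setOf_eq, Set.mem_range]
  constructor
  · rintro ⟨h1, h2, h3, h4⟩
    have ha1 : a1 ∈ Set.range (mp (d + 1)) := by rw [← mp_range]; exact ⟨h1, h3⟩
    obtain ⟨b1, hb1⟩ := ha1
    have ha2 : a2 ∈ Set.range (mp a2.natDegree) := by rw [← mp_range]; exact ⟨h2, rfl⟩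
    obtain ⟨b2, hb2⟩ := ha2
    exact ⟨(b1, ⟨⟨a2.natDegree, h4⟩, b2⟩), by
      simp only [Prod.map_apply]
      rw [hb1]
      show (a1, mp a2.natDegree b2) = (a1, a2)
      rw [hb2]⟩
  · rintro ⟨⟨b1, ⟨j, b2⟩⟩, heq⟩
    have h1 : mp (d + 1) b1 = a1 := congrArg Prod.fst heq
    have h2 : mSig d ⟨j, b2⟩ = a2 := congrArg Prod.snd heq
    subst h1
    subst h2
    refine ⟨mp_monic _ _, mp_monic _ _, mp_natDegree _ _, ?_⟩
    exact lt_of_eq_of_lt (mp_natDegree (j : ℕ) b2) j.isLt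

lemma sum_sig (d : ℕ) : ∑ σ : (Σ j : Fin (d + 1), (Fin (j : ℕ) → F)), ((φ (mSig d σ))⁻¹) ^ (q - 1)
    = ∑ j ∈ Finset.range (d + 1), lam (F := F) j ^ (q - 1) := by
  rw [← Finset.univ_sigma_univ, Finset.sum_sigma, ← Fin.sum_univ_eq_sum_range]
  refine Finset.sum_congr rfl fun j _ => ?_
  have := sum_monic (F := F) (j : ℕ) (q - 1) (by have := hq2 (F := F); omega) (by omega)
  calc ∑ b : Fin (j : ℕ) → F, ((φ (mSig d ⟨j, b⟩))⁻¹) ^ (q - 1)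
      = ∑ b : Fin (j : ℕ) → F, ((φ (mp (j : ℕ) b))⁻¹) ^ (q - 1) := rfl
    _ = kap (j : ℕ) ^ (q - 1) * ((wK (j : ℕ))⁻¹) ^ (q - 1) := this
    _ = lam (F := F) (j : ℕ) ^ (q - 1) := by rw [lam, mul_pow]

lemma lam_pow_q (d : ℕ) : kap (F := F) d ^ q * ((wK d)⁻¹) ^ q = lam d ^ q := by
  rw [lam, mul_pow]

theorem stmt14' (ε : Fˣ) (d : ℕ) :
    (∑ᶠ a ∈ {a : Polynomial F | a.Monic ∧ a.natDegree = d},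
        algebraMap F (RatFunc F) ((ε : F) ^ d) *
          ((algebraMap (Polynomial F) (RatFunc F) a)⁻¹) ^ Fintype.card F) +
      (algebraMap F (RatFunc F) (ε : F))⁻¹ *
        algebraMap (Polynomial F) (RatFunc F)
          (Polynomial.X ^ Fintype.card F - Polynomial.X) *
        ∑ᶠ a ∈ {a : Polynomial F × Polynomial F |
            a.1.Monic ∧ a.2.Monic ∧ a.1.natDegree = d + 1 ∧ a.2.natDegree < d + 1},
          algebraMap F (RatFunc F) ((ε : F) ^ (d + 1)) *
            (algebraMap (Polynomial F) (RatFunc F) a.1)⁻¹ *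
            ((algebraMap (Polynomial F) (RatFunc F) a.2)⁻¹) ^ (Fintype.card F - 1) = 0 := by
  classical
  rw [mp_range d, finsum_mem_range (mp_inj d), finsum_eq_sum_of_fintype,
    pair_range d, finsum_mem_range ((mp_inj (d + 1)).prodMap (mSig_inj d)),
    finsum_eq_sum_of_fintype, Fintype.sum_prod_type]
  have hp1 : ∀ (x : Fin (d + 1) → F) (σ : Σ j : Fin (d + 1), (Fin (j : ℕ) → F)),
      (Prod.map (mp (d + 1)) (mSig (F := F) d) (x, σ)).1 = mp (d + 1) x := fun _ _ => rfl
  have hp2 : ∀ (x : Fin (d + 1) → F) (σ : Σ j : Fin (d + 1), (Fin (j : ℕ) → F)),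
      (Prod.map (mp (d + 1)) (mSig (F := F) d) (x, σ)).2 = mSig d σ := fun _ _ => rfl
  simp only [hp1, hp2]
  have hS1 : ∑ b : Fin d → F, em ((ε : F) ^ d) * ((φ (mp d b))⁻¹) ^ q
      = em ((ε : F) ^ d) * (lam d ^ q) := by
    rw [← Finset.mul_sum, sum_monic d q Fintype.card_pos le_rfl, lam_pow_q]
  have hone : ∑ x : Fin (d + 1) → F, (φ (mp (d + 1) x))⁻¹ = kap (d + 1) * (wK (d + 1))⁻¹ := by
    have := sum_monic (F := F) (d + 1) 1 le_rfl Fintype.card_pos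
    simpa using this
  have hS2 : (∑ x : Fin (d + 1) → F, ∑ σ : Σ j : Fin (d + 1), (Fin (j : ℕ) → F),
        em ((ε : F) ^ (d + 1)) * (φ (mp (d + 1) x))⁻¹ * ((φ (mSig d σ))⁻¹) ^ (q - 1))
      = em ((ε : F) ^ (d + 1)) * (kap (d + 1) * (wK (d + 1))⁻¹)
          * ∑ j ∈ Finset.range (d + 1), lam (F := F) j ^ (q - 1) := by
    have hin : ∀ x : Fin (d + 1) → F,
        ∑ σ : Σ j : Fin (d + 1), (Fin (j : ℕ) → F),
          em ((ε : F) ^ (d + 1)) * (φ (mp (d + 1) x))⁻¹ * ((φ (mSig d σ))⁻¹) ^ (q - 1)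
        = em ((ε : F) ^ (d + 1)) * (φ (mp (d + 1) x))⁻¹
            * ∑ σ : Σ j : Fin (d + 1), (Fin (j : ℕ) → F), ((φ (mSig d σ))⁻¹) ^ (q - 1) :=
      fun x => by rw [Finset.mul_sum]
    rw [Finset.sum_congr rfl fun x _ => hin x, ← Finset.sum_mul, ← Finset.mul_sum, hone,
      sum_sig d]
  rw [hS1, hS2, telescope d]
  have heU : em (ε : F) ≠ 0 := fun h =>
    Units.ne_zero ε ((algebraMap F (RatFunc F)).injective (by rw [h, map_zero]))
  have hemp : em ((ε : F) ^ (d + 1)) = em ((ε : F) ^ d) * em (ε : F) := by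
    rw [pow_succ, map_mul]
  have hD1 : φ (X ^ q - X) = xq 1 - xq 0 := by
    rw [map_sub, map_pow, xq_zero]
    congr 1
    show (φ X : RatFunc F) ^ q = (φ X) ^ (Fintype.card F ^ 1)
    rw [pow_one]
  have hDD : (xq (F := F) 1 - xq 0) * (xq 1 - xq 0)⁻¹ = 1 :=
    mul_inv_cancel₀ (brk_ne 1 le_rfl)
  have heUU : (em (ε : F))⁻¹ * em (ε : F) = 1 := inv_mul_cancel₀ heU
  have hlam := lam_succ (F := F) d
  have hpow2 : lam (F := F) d * lam d ^ (q - 1) = lam d ^ q := by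
    rw [← pow_succ', Nat.sub_add_cancel Fintype.card_pos]
  have hl : kap (F := F) (d + 1) * (wK (d + 1))⁻¹ = lam (d + 1) := rfl
  rw [hemp, hD1, hl]
  linear_combination
    (em ((ε : F) ^ d) * (em (ε : F))⁻¹ * em (ε : F) * lam (F := F) (d + 1)
        * lam (F := F) d ^ (q - 1) * (xq (d + 1) - xq 0)) * hDD
    + (em ((ε : F) ^ d) * lam (F := F) (d + 1) * lam (F := F) d ^ (q - 1)
        * (xq (d + 1) - xq 0)) * heUU
    + (em ((ε : F) ^ d) * lam (F := F) d ^ (q - 1)) * hlam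
    + (-(em ((ε : F) ^ d))) * hpow2

end Chunk1
end Stmt14Aux

/-- Let `A = F_q[θ]`, `D_1 = θ^q - θ`.  For every `ε ∈ F_q^×` and `d ≥ 0`,
`S_d(ε; q) + ε⁻¹ D_1 S_{d+1}(ε, 1; 1, q-1) = 0`, where
`S_d(ε; q) = ∑_{a monic, deg a = d} ε^d a^{-q}` and
`S_{d+1}(ε, 1; 1, q-1) = ∑ ε^{deg a_1} / (a_1 a_2^{q-1})` over monic
`a_1, a_2` with `d + 1 = deg a_1 > deg a_2 ≥ 0`; the sums are finite sums in
`K = F_q(θ)`. -/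
theorem stmt14 {F : Type*} [Field F] [Fintype F] (ε : Fˣ) (d : ℕ) :
    (∑ᶠ a ∈ {a : Polynomial F | a.Monic ∧ a.natDegree = d},
        algebraMap F (RatFunc F) ((ε : F) ^ d) *
          ((algebraMap (Polynomial F) (RatFunc F) a)⁻¹) ^ Fintype.card F) +
      (algebraMap F (RatFunc F) (ε : F))⁻¹ *
        algebraMap (Polynomial F) (RatFunc F)
          (Polynomial.X ^ Fintype.card F - Polynomial.X) *
        ∑ᶠ a ∈ {a : Polynomial F × Polynomial F |
            a.1.Monic ∧ a.2.Monic ∧ a.1.natDegree = d + 1 ∧ a.2.natDegree < d + 1},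
          algebraMap F (RatFunc F) ((ε : F) ^ (d + 1)) *
            (algebraMap (Polynomial F) (RatFunc F) a.1)⁻¹ *
            ((algebraMap (Polynomial F) (RatFunc F) a.2)⁻¹) ^ (Fintype.card F - 1) = 0 :=
  Stmt14Aux.stmt14' ε d
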